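/- Let r ∈ (-∞, 0), λ < 0, and let L : B(E,[0,∞]) → [0,∞] satisfy: (i) 1 - e^{-L(v_t)} = e^{rt} for all t ≥ 0, where v_t ∈ B(E,(0,∞]) are given functions; (ii) for each t, u ↦ 1 - e^{-L(u v_t)} is concave on [0,∞) with value 0 at u = 0; (iii) for every s ≥ 0 and ε > 0 there is T(s,ε) with (1-ε) v_{t+s} ≤ e^{λ s} v_t ≤ (1+ε) v_{t+s} pointwise for t > T(s,ε), and L is monotone. Then r ≥ λ. -/

import Mathlib

open scoped ENNReal

/-- Let `r < 0`, `λ < 0`, and let `L` be a monotone `[0,∞]`-valued functional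
with `1 - e^{-L(v_t)} = e^{r t}` for given strictly positive functions `v_t`;
assume `u ↦ 1 - e^{-L(u v_t)}` is concave on `[0,∞)` with value `0` at
`u = 0`, and `e^{λ s} v_t ≈ v_{t+s}` up to `(1 ± ε)` for large `t`.
Then `r ≥ λ`. -/
theorem decay_rate_ge_lambda
    (E : Type*)
    (lam r : ℝ) (hlam : lam < 0) (hr : r < 0)
    (v : ℝ → E → ℝ≥0∞) (hvpos : ∀ t : ℝ, 0 < t → ∀ x : E, 0 < v t x)
    (L : (E → ℝ≥0∞) → ℝ≥0∞)
    (q : ℝ≥0∞ → ℝ)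
    (hq : ∀ x : ℝ≥0∞, q x = 1 - (if x = ∞ then 0 else Real.exp (-x.toReal)))
    (hmono : ∀ f g : E → ℝ≥0∞, (∀ x, f x ≤ g x) → L f ≤ L g)
    (hi : ∀ t : ℝ, 0 < t → q (L (v t)) = Real.exp (r * t))
    (hconc : ∀ t : ℝ, 0 < t → ∀ u u' s : ℝ, 0 ≤ u → 0 ≤ u' → 0 ≤ s → s ≤ 1 →
      s * q (L (fun x => ENNReal.ofReal u * v t x))
        + (1 - s) * q (L (fun x => ENNReal.ofReal u' * v t x))
      ≤ q (L (fun x => ENNReal.ofReal (s * u + (1 - s) * u') * v t x)))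
    (hzero : ∀ t : ℝ, 0 < t → q (L (fun x => ENNReal.ofReal 0 * v t x)) = 0)
    (hiii : ∀ s : ℝ, 0 ≤ s → ∀ ε : ℝ, 0 < ε → ∃ T : ℝ, 0 < T ∧
      ∀ t : ℝ, T < t → ∀ x : E,
        ENNReal.ofReal (1 - ε) * v (t + s) x
            ≤ ENNReal.ofReal (Real.exp (lam * s)) * v t x ∧
        ENNReal.ofReal (Real.exp (lam * s)) * v t x
            ≤ ENNReal.ofReal (1 + ε) * v (t + s) x) :
    lam ≤ r := by
  -- q is monotone
  have qmono : ∀ x y : ℝ≥0∞, x ≤ y → q x ≤ q y := by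
    intro x y hxy
    rw [hq, hq]
    by_cases hy : y = ∞
    · simp only [hy, if_pos rfl]
      split_ifs with hx
      · simp
      · have := Real.exp_nonneg (-x.toReal); linarith
    · have hx : x ≠ ∞ := fun h => hy (top_le_iff.mp (h ▸ hxy))
      simp only [hx, hy, if_false]
      have h1 : x.toReal ≤ y.toReal := ENNReal.toReal_mono hy hxy
      have h2 := Real.exp_le_exp.mpr (neg_le_neg h1)
      linarith
  -- key estimate for every ε > 0
  have hkey : ∀ ε : ℝ, 0 < ε → Real.exp lam ≤ (1 + ε) * Real.exp r := by
    intro ε hε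
    obtain ⟨T, hT, hTprop⟩ := hiii 1 zero_le_one ε hε
    simp only [mul_one] at hTprop
    set t := max T 0 + 1 with htdef
    have htT : T < t := by have := le_max_left T 0; simp only [htdef]; linarith
    have ht0 : 0 < t := by have := le_max_right T 0; simp only [htdef]; linarith
    have ht1 : 0 < t + 1 := by linarith
    -- Step A: concavity lower bound at time t
    have hslam : Real.exp lam ≤ 1 := Real.exp_le_one_iff.mpr hlam.le
    have hA : Real.exp lam * Real.exp (r * t)
        ≤ q (L (fun x => ENNReal.ofReal (Real.exp lam) * v t x)) := by
      have hc := hconc t ht0 1 0 (Real.exp lam) zero_le_one le_rfl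
        (Real.exp_nonneg lam) hslam
      have harg : Real.exp lam * 1 + (1 - Real.exp lam) * 0 = Real.exp lam := by ring
      rw [harg, hzero t ht0] at hc
      simp only [ENNReal.ofReal_one, one_mul] at hc
      rw [hi t ht0] at hc
      linarith
    -- Step B: monotonicity
    have hB : q (L (fun x => ENNReal.ofReal (Real.exp lam) * v t x))
        ≤ q (L (fun x => ENNReal.ofReal (1 + ε) * v (t + 1) x)) := by
      refine qmono _ _ (hmono _ _ (fun x => ?_))
      exact (hTprop t htT x).2
    -- Step C: concavity upper bound at time t+1
    have hsC0 : (0:ℝ) < 1 + ε := by linarith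
    have hC : q (L (fun x => ENNReal.ofReal (1 + ε) * v (t + 1) x))
        ≤ (1 + ε) * Real.exp (r * (t + 1)) := by
      have hc := hconc (t + 1) ht1 (1 + ε) 0 (1 / (1 + ε)) (by linarith) le_rfl
        (by positivity) (by rw [div_le_one hsC0]; linarith)
      have harg : 1 / (1 + ε) * (1 + ε) + (1 - 1 / (1 + ε)) * 0 = 1 := by
        field_simp
        ring
      rw [harg, hzero (t + 1) ht1] at hc
      simp only [ENNReal.ofReal_one, one_mul] at hc
      rw [hi (t + 1) ht1] at hc
      set Q := q (L (fun x => ENNReal.ofReal (1 + ε) * v (t + 1) x)) with hQ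
      have hkey2 : Q = (1 + ε) * (1 / (1 + ε) * Q) := by
        field_simp
      rw [hkey2]
      have : 1 / (1 + ε) * Q ≤ Real.exp (r * (t + 1)) := by linarith
      exact mul_le_mul_of_nonneg_left this hsC0.le
    have hfin : Real.exp lam * Real.exp (r * t)
        ≤ (1 + ε) * (Real.exp (r * t) * Real.exp r) := by
      have e1 := hA.trans (hB.trans hC)
      rwa [show r * (t + 1) = r * t + r by ring, Real.exp_add] at e1
    have hpos := Real.exp_pos (r * t)
    have h2 : (1 + ε) * (Real.exp (r * t) * Real.exp r)
        = ((1 + ε) * Real.exp r) * Real.exp (r * t) := by ring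
    rw [h2] at hfin
    exact le_of_mul_le_mul_right hfin hpos
  -- let ε → 0
  have hle : Real.exp lam ≤ Real.exp r := by
    apply le_of_forall_pos_le_add
    intro δ hδ
    have hδ' : 0 < δ / Real.exp r := by positivity
    have h1 := hkey (δ / Real.exp r) hδ'
    have h2 : (1 + δ / Real.exp r) * Real.exp r = Real.exp r + δ := by
      field_simp
    linarith
  exact Real.exp_le_exp.mp hle
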